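/- arXiv:0905.3890 — 2 statements merged into one kernel-verified Lean document; each statement's English description precedes it below -/
import Mathlib

section
/- Green-type regularity lemma for sparse Cayley graphs: Let α, ε ∈ (0,1). There exists σ = σ(ε,α) > 0 such that if R ⊆ V = F_p^n is σ-regular and A ⊆ R has |A| = α|R|, then there is a subspace H ≤ V of index at most W(4ε^{-3}α^{-2}) which is ε-regular for A, where W is the tower function W(1) = 2p, W(t) = (2p)^{W(t-1)}. One may take σ = (2 W(4ε^{-3}α^{-2}))^{-1}. -/
open Finset

/-- `e(z) = e^{2πiz}`. -/
noncomputable def eC (z : ℝ) : ℂ := Complex.exp (2 * Real.pi * Complex.I * z)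

/-- `⟨x,ξ⟩ = (Σ_i x_i ξ_i)/p` as a real number. -/
noncomputable def bracket (p n : ℕ) (x ξ : Fin n → ZMod p) : ℝ :=
  ((∑ i, x i * ξ i : ZMod p).val : ℝ) / p

/-- Fourier transform over `V = F_p^n`: `f̂(ξ) = E_{x∈V} f(x) e(-⟨x,ξ⟩)`. -/
noncomputable def ft (p n : ℕ) [NeZero p] (f : (Fin n → ZMod p) → ℂ) (ξ : Fin n → ZMod p) : ℂ :=
  (Fintype.card (Fin n → ZMod p) : ℂ)⁻¹ * ∑ x, f x * eC (-(bracket p n x ξ))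

open Classical in
/-- Fourier transform with respect to a subspace `H`:
`f̂(ξ) = E_{x∈H} f(x) e(-⟨x,ξ⟩)`. -/
noncomputable def ftH (p n : ℕ) [NeZero p] (H : Submodule (ZMod p) (Fin n → ZMod p))
    (f : (Fin n → ZMod p) → ℂ) (ξ : Fin n → ZMod p) : ℂ :=
  (Nat.card H : ℂ)⁻¹ * ∑ x ∈ Finset.univ.filter (· ∈ H), f x * eC (-(bracket p n x ξ))

open Classical in
/-- The indicator function of `A_H^v = (A+v) ∩ H` (as a function on `V`, supported on `H`). -/
noncomputable def indAH (p n : ℕ) (A : Set (Fin n → ZMod p))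
    (H : Submodule (ZMod p) (Fin n → ZMod p)) (v x : Fin n → ZMod p) : ℂ :=
  if x ∈ H ∧ x - v ∈ A then 1 else 0

open Classical in
/-- `|A_H^v|`, the cardinality of `(A+v) ∩ H`. -/
noncomputable def cardAH (p n : ℕ) [NeZero p] (A : Set (Fin n → ZMod p))
    (H : Submodule (ZMod p) (Fin n → ZMod p)) (v : Fin n → ZMod p) : ℕ :=
  (Finset.univ.filter (fun x => x ∈ H ∧ x - v ∈ A)).card
/-- `v` is an ε-regular vector for `A` with respect to `H`:
`sup_{ξ∉H^⊥} |Â_H^v(ξ)| ≤ ε|A|/N`. -/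
def regVec (p n : ℕ) [NeZero p] (ε : ℝ) (A : Finset (Fin n → ZMod p))
    (H : Submodule (ZMod p) (Fin n → ZMod p)) (v : Fin n → ZMod p) : Prop :=
  ∀ ξ : Fin n → ZMod p, ¬ (∀ h ∈ H, (∑ i, h i * ξ i : ZMod p) = 0) →
    ‖ftH p n H (indAH p n (↑A) H v) ξ‖ ≤ ε * A.card / (Fintype.card (Fin n → ZMod p) : ℝ)

/-- The normalized mean-square density
`d(A,H) = (1/N) Σ_{v∈V} (|A_H^v|/|H|)² / (|A|/N)²`. -/
noncomputable def dens (p n : ℕ) [NeZero p] (A : Finset (Fin n → ZMod p))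
    (H : Submodule (ZMod p) (Fin n → ZMod p)) : ℝ :=
  (Fintype.card (Fin n → ZMod p) : ℝ)⁻¹ *
    ∑ v : Fin n → ZMod p,
      ((cardAH p n (↑A) H v : ℝ) / (Nat.card H : ℝ)) ^ 2
        / ((A.card : ℝ) / (Fintype.card (Fin n → ZMod p) : ℝ)) ^ 2

/-- The tower function `W(1) = 2p`, `W(t+1) = (2p)^{W(t)}` (indexed from 0 here,
so `tower p 0 = 2p` plays the role of `W(1)`). -/
def tower (p : ℕ) : ℕ → ℕ
  | 0 => 2 * p
  | t + 1 => (2 * p) ^ tower p t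

/-! ### Auxiliary lemmas -/

section Aux

open Complex in
lemma eC_add (a b : ℝ) : eC (a + b) = eC a * eC b := by
  rw [eC, eC, eC, ← Complex.exp_add]
  congr 1
  push_cast
  ring

lemma eC_zero : eC 0 = 1 := by simp [eC]

open Complex in
lemma eC_int (k : ℤ) : eC k = 1 := by
  rw [eC]
  have : 2 * (Real.pi : ℂ) * Complex.I * (k : ℝ) = (k : ℤ) * (2 * Real.pi * Complex.I) := by
    push_cast; ring
  rw [this, Complex.exp_int_mul_two_pi_mul_I]

open Complex in
lemma eC_conj (r : ℝ) : (starRingEnd ℂ) (eC r) = eC (-r) := by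
  rw [eC, eC, ← Complex.exp_conj]
  congr 1
  simp only [map_mul, Complex.conj_ofReal, Complex.conj_I, map_ofNat]
  push_cast
  ring

lemma eC_mul_eC_neg (r : ℝ) : eC r * eC (-r) = 1 := by
  rw [← eC_add]; simp [eC_zero]

lemma norm_eC (r : ℝ) : ‖eC r‖ = 1 := by
  rw [eC]
  rw [show (2 : ℂ) * Real.pi * Complex.I * (r : ℝ) = (2 * Real.pi * r : ℝ) * Complex.I by
    push_cast; ring]
  exact Complex.norm_exp_ofReal_mul_I _

lemma eC_mul_conj (r : ℝ) : eC r * (starRingEnd ℂ) (eC r) = 1 := by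
  rw [eC_conj]; exact eC_mul_eC_neg r

lemma eC_ne_one {x : ℝ} (h0 : 0 < x) (h1 : x < 1) : eC x ≠ 1 := by
  rw [eC]
  intro hone
  rw [Complex.exp_eq_one_iff] at hone
  obtain ⟨k, hk⟩ := hone
  have h2πI : (2 : ℂ) * Real.pi * Complex.I ≠ 0 := by
    simp [Real.pi_ne_zero, Complex.I_ne_zero]
  have : (x : ℂ) = (k : ℂ) := by
    apply mul_left_cancel₀ h2πI
    rw [hk]; ring
  have hxk : x = (k : ℝ) := by exact_mod_cast this
  have hk0 : (0 : ℝ) < (k : ℝ) := by linarith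
  have hk1 : (k : ℝ) < 1 := by linarith
  have hk0' : (0 : ℤ) < k := by exact_mod_cast hk0
  have hk1' : (1 : ℝ) ≤ (k : ℝ) := by exact_mod_cast hk0'
  linarith

variable {p n : ℕ} [NeZero p]

/-- The dot-product linear functional. -/
def dotL (ξ : Fin n → ZMod p) : (Fin n → ZMod p) →ₗ[ZMod p] ZMod p where
  toFun x := ∑ i, x i * ξ i
  map_add' x y := by simp [add_mul, Finset.sum_add_distrib]
  map_smul' c x := by simp [Finset.mul_sum, mul_assoc]

lemma dotL_apply (ξ x : Fin n → ZMod p) : dotL ξ x = ∑ i, x i * ξ i := rfl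

/-- Additivity of `eC ∘ bracket`. -/
lemma eC_bracket_add (x y ξ : Fin n → ZMod p) :
    eC (bracket p n (x + y) ξ) = eC (bracket p n x ξ) * eC (bracket p n y ξ) := by
  have hp0 : (p : ℝ) ≠ 0 := Nat.cast_ne_zero.mpr (NeZero.ne p)
  set a := (∑ i, x i * ξ i : ZMod p) with ha
  set b := (∑ i, y i * ξ i : ZMod p) with hb
  have hab : (∑ i, (x + y) i * ξ i : ZMod p) = a + b := by
    rw [ha, hb, ← Finset.sum_add_distrib]
    apply Finset.sum_congr rfl
    intro i _
    simp [add_mul]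
  set q := (a.val + b.val) / p with hq
  have hmoddiv : ((a + b).val : ℝ) + (p : ℝ) * (q : ℝ) = (a.val : ℝ) + (b.val : ℝ) := by
    have h := Nat.mod_add_div (a.val + b.val) p
    have h2 : (a + b).val = (a.val + b.val) % p := ZMod.val_add a b
    rw [h2, hq]
    exact_mod_cast congrArg (Nat.cast : ℕ → ℝ) h
  have key : bracket p n (x + y) ξ = bracket p n x ξ + bracket p n y ξ + (-(q : ℝ)) := by
    have h3 : ((a + b).val : ℝ) = (a.val : ℝ) + (b.val : ℝ) - (p : ℝ) * (q : ℝ) := by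
      linarith
    rw [bracket, bracket, bracket, hab, ← ha, ← hb, h3, sub_div, add_div,
      mul_div_cancel_left₀ _ hp0]
    ring
  rw [key, eC_add, eC_add]
  have hq1 : eC (-(q : ℝ)) = 1 := by
    have := eC_int (-(q : ℤ))
    push_cast at this
    exact this
  rw [hq1, mul_one]

lemma eC_neg_bracket_add (x y ξ : Fin n → ZMod p) :
    eC (-bracket p n (x + y) ξ) = eC (-bracket p n x ξ) * eC (-bracket p n y ξ) := by
  have := congrArg (starRingEnd ℂ) (eC_bracket_add x y ξ)
  rwa [map_mul, eC_conj, eC_conj, eC_conj] at this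

lemma bracket_eq_zero {x ξ : Fin n → ZMod p} (h : (∑ i, x i * ξ i : ZMod p) = 0) :
    bracket p n x ξ = 0 := by
  simp [bracket, h]

open Classical in
/-- The finset of elements of `H`. -/
noncomputable def Hs (H : Submodule (ZMod p) (Fin n → ZMod p)) : Finset (Fin n → ZMod p) :=
  Finset.univ.filter (· ∈ H)

open Classical in
lemma mem_Hs {H : Submodule (ZMod p) (Fin n → ZMod p)} {x : Fin n → ZMod p} :
    x ∈ Hs H ↔ x ∈ H := by simp [Hs]

lemma card_Hs (H : Submodule (ZMod p) (Fin n → ZMod p)) : (Hs H).card = Nat.card H := by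
  classical
  rw [Nat.card_eq_fintype_card]
  simp [Hs, Fintype.card_subtype]

lemma card_H_pos (H : Submodule (ZMod p) (Fin n → ZMod p)) : 0 < Nat.card H :=
  Nat.card_pos

lemma cardV_pos : 0 < Fintype.card (Fin n → ZMod p) := Fintype.card_pos

/-- Character sum over a subspace vanishes for a character nontrivial on it. -/
lemma sum_eC_bracket (hp : p.Prime) {H : Submodule (ZMod p) (Fin n → ZMod p)}
    {ξ : Fin n → ZMod p} (hξ : ¬ (∀ h ∈ H, (∑ i, h i * ξ i : ZMod p) = 0)) :
    ∑ h ∈ Hs H, eC (bracket p n h ξ) = 0 := by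
  haveI := Fact.mk hp
  haveI := Fact.mk hp.one_lt
  push_neg at hξ
  obtain ⟨h₀, hh₀, hc⟩ := hξ
  set c := (∑ i, h₀ i * ξ i : ZMod p) with hcdef
  set h₁ := c⁻¹ • h₀ with hh₁def
  have hh₁H : h₁ ∈ H := H.smul_mem _ hh₀
  have hdot1 : (∑ i, h₁ i * ξ i : ZMod p) = 1 := by
    rw [hh₁def]
    have : ∑ i, (c⁻¹ • h₀) i * ξ i = c⁻¹ * ∑ i, h₀ i * ξ i := by
      rw [Finset.mul_sum]
      apply Finset.sum_congr rfl
      intro i _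
      simp [mul_assoc]
    rw [this, ← hcdef, inv_mul_cancel₀ hc]
  have hbr1 : bracket p n h₁ ξ = 1 / (p : ℝ) := by
    rw [bracket, hdot1, ZMod.val_one]
    norm_num
  set S := ∑ h ∈ Hs H, eC (bracket p n h ξ) with hSdef
  have shift : ∑ h ∈ Hs H, eC (bracket p n (h + h₁) ξ) = S := by
    rw [hSdef]
    apply Finset.sum_equiv (Equiv.addRight h₁)
    · intro i
      simp only [mem_Hs, Equiv.coe_addRight]
      constructor
      · intro hi; exact H.add_mem hi hh₁H
      · intro hi; simpa using H.sub_mem hi hh₁H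
    · intro i _; rfl
  have key : eC (bracket p n h₁ ξ) * S = S := by
    calc eC (bracket p n h₁ ξ) * S = ∑ h ∈ Hs H, eC (bracket p n (h + h₁) ξ) := by
          rw [hSdef, Finset.mul_sum]
          apply Finset.sum_congr rfl
          intro h _
          rw [eC_bracket_add, mul_comm]
      _ = S := shift
  have hne : eC (bracket p n h₁ ξ) ≠ 1 := by
    have hppos : (0 : ℝ) < (p : ℝ) := by exact_mod_cast hp.pos
    rw [hbr1]
    apply eC_ne_one
    · exact div_pos one_pos hppos
    · rw [div_lt_one hppos]
      exact_mod_cast hp.one_lt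
  have : (eC (bracket p n h₁ ξ) - 1) * S = 0 := by
    rw [sub_mul, one_mul, key, sub_self]
  rcases mul_eq_zero.mp this with h | h
  · exact absurd (sub_eq_zero.mp h) hne
  · exact h

lemma cardAH_eq_sum (A : Set (Fin n → ZMod p)) (H : Submodule (ZMod p) (Fin n → ZMod p))
    (v : Fin n → ZMod p) [inst : ∀ x : Fin n → ZMod p, Decidable (x ∈ H ∧ x - v ∈ A)] :
    (cardAH p n A H v : ℕ) = ∑ x : Fin n → ZMod p, if x ∈ H ∧ x - v ∈ A then 1 else 0 := by
  rw [cardAH, Finset.card_filter]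
  apply Finset.sum_congr rfl
  intro x _
  congr 1

/-- Key convolution identity: `Σ_{h∈H} |A_{H'}^{v+h}| e(-⟨h,ξ⟩) = |H'| * conj(Σ_{z∈H} 1_{A_H^v}(z) e(-⟨z,ξ⟩))`,
valid when `H' ≤ H` and `ξ ∈ H'^⊥`. -/
lemma conv_identity (A : Set (Fin n → ZMod p)) {H' H : Submodule (ZMod p) (Fin n → ZMod p)}
    (hH' : H' ≤ H) {ξ : Fin n → ZMod p} (hξ0 : ∀ x ∈ H', (∑ i, x i * ξ i : ZMod p) = 0)
    (v : Fin n → ZMod p) :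
    ∑ h ∈ Hs H, (cardAH p n A H' (v + h) : ℂ) * eC (-bracket p n h ξ)
      = (Nat.card H' : ℂ) *
        (starRingEnd ℂ) (∑ z ∈ Hs H, indAH p n A H v z * eC (-bracket p n z ξ)) := by
  classical
  set Z := ∑ z ∈ Hs H, indAH p n A H v z * eC (-bracket p n z ξ) with hZ
  have hstep1 : ∀ h ∈ Hs H, (cardAH p n A H' (v + h) : ℂ) * eC (-bracket p n h ξ)
      = ∑ x : Fin n → ZMod p,
          (if x ∈ H' ∧ x - (v + h) ∈ A then eC (-bracket p n h ξ) else 0) := by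
    intro h _
    rw [cardAH_eq_sum]
    push_cast
    rw [Finset.sum_mul]
    apply Finset.sum_congr rfl
    intro x _
    split <;> simp
  rw [Finset.sum_congr rfl hstep1, Finset.sum_comm]
  have hinner : ∀ x : Fin n → ZMod p, x ∈ Finset.univ →
      ∑ h ∈ Hs H, (if x ∈ H' ∧ x - (v + h) ∈ A then eC (-bracket p n h ξ) else 0)
        = if x ∈ H' then (starRingEnd ℂ) Z else 0 := by
    intro x _
    by_cases hx : x ∈ H'
    · simp only [hx, true_and, if_pos]
      have hxH : x ∈ H := hH' hx
      have hbrx : eC (-bracket p n x ξ) = 1 := by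
        rw [bracket_eq_zero (hξ0 x hx), neg_zero, eC_zero]
      rw [hZ, map_sum]
      refine (Finset.sum_equiv (Equiv.subLeft x) ?_ ?_).symm
      · intro z
        simp only [mem_Hs, Equiv.subLeft_apply]
        constructor
        · intro hz; exact H.sub_mem hxH hz
        · intro hz
          have := H.sub_mem hxH hz
          simpa using this
      · intro z hz
        rw [mem_Hs] at hz
        have harg : x - (v + (x - z)) = z - v := by abel
        have h1 : eC (-bracket p n (x - z) ξ) * eC (-bracket p n z ξ) = 1 := by
          rw [← eC_neg_bracket_add]
          simpa [sub_add_cancel] using hbrx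
        have h2 : eC (-bracket p n (x - z) ξ) = eC (bracket p n z ξ) := by
          calc eC (-bracket p n (x - z) ξ)
              = eC (-bracket p n (x - z) ξ) * (eC (-bracket p n z ξ) * eC (bracket p n z ξ)) := by
                rw [mul_comm (eC (-bracket p n z ξ)), eC_mul_eC_neg, mul_one]
            _ = eC (bracket p n z ξ) := by rw [← mul_assoc, h1, one_mul]
        have hconj : (starRingEnd ℂ) (indAH p n A H v z * eC (-bracket p n z ξ))
            = (if z - v ∈ A then eC (bracket p n z ξ) else 0) := by
          rw [map_mul, indAH, apply_ite (starRingEnd ℂ), map_one, map_zero, eC_conj, neg_neg]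
          simp only [hz, true_and]
          split <;> simp
        rw [hconj, Equiv.subLeft_apply, harg, h2]
    · simp [hx]
  rw [Finset.sum_congr rfl hinner, ← Finset.sum_filter, Finset.sum_const, nsmul_eq_mul]
  congr 2
  rw [Nat.card_eq_fintype_card]
  simp [Fintype.card_subtype]

lemma cardAH_top (A : Finset (Fin n → ZMod p)) (v : Fin n → ZMod p) :
    cardAH p n (↑A) ⊤ v = A.card := by
  classical
  rw [cardAH_eq_sum]
  have h1 : ∀ x : Fin n → ZMod p,
      (if x ∈ (⊤ : Submodule (ZMod p) (Fin n → ZMod p)) ∧ x - v ∈ (↑A : Set (Fin n → ZMod p))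
        then 1 else 0) = (if x - v ∈ A then 1 else 0) := by
    intro x
    split_ifs with hc hd hd
    · rfl
    · exact absurd hc.2 hd
    · exact absurd ⟨Submodule.mem_top, hd⟩ hc
    · rfl
  rw [Finset.sum_congr rfl (fun x _ => h1 x)]
  have h2 : ∑ x : Fin n → ZMod p, (if x - v ∈ A then 1 else 0)
      = ∑ a : Fin n → ZMod p, (if a ∈ A then 1 else 0) := by
    refine Finset.sum_equiv (Equiv.subRight v) (fun _ => by simp) ?_
    intro x _
    simp [Equiv.subRight_apply]
  rw [h2, ← Finset.card_filter]
  congr 1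
  ext a
  simp

/-- Specialization to `ξ = 0`: counting. -/
lemma sum_cardAH_sub (A : Set (Fin n → ZMod p)) {H' H : Submodule (ZMod p) (Fin n → ZMod p)}
    (hH' : H' ≤ H) (v : Fin n → ZMod p) :
    ∑ h ∈ Hs H, (cardAH p n A H' (v + h) : ℝ) = (Nat.card H' : ℝ) * (cardAH p n A H v : ℝ) := by
  classical
  have h := conv_identity A hH' (ξ := 0) (fun x _ => by simp) v
  have hbr : ∀ z : Fin n → ZMod p, eC (-bracket p n z 0) = 1 := by
    intro z
    have hz : (∑ i, z i * (0 : Fin n → ZMod p) i : ZMod p) = 0 := by simp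
    rw [bracket_eq_zero hz, neg_zero, eC_zero]
  simp only [hbr, mul_one] at h
  have hind : ∑ z ∈ Hs H, indAH p n A H v z = (cardAH p n A H v : ℂ) := by
    have h1 : ∑ z ∈ Hs H, indAH p n A H v z = ∑ z : Fin n → ZMod p, indAH p n A H v z := by
      apply Finset.sum_subset (Finset.subset_univ (Hs H))
      intro x _ hx
      rw [mem_Hs] at hx
      rw [indAH, if_neg (fun hc => hx hc.1)]
    rw [h1, cardAH_eq_sum]
    push_cast
    apply Finset.sum_congr rfl
    intro x _
    rw [indAH]
  rw [hind] at h
  have h2 : ∑ z ∈ Hs H, ((cardAH p n A H' (v + z) : ℝ) : ℂ)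
      = (((Nat.card H' : ℝ) * (cardAH p n A H v : ℝ) : ℝ) : ℂ) := by
    push_cast
    rw [h, map_natCast]
  rw [← Complex.ofReal_sum] at h2
  exact_mod_cast h2

/-- Total count: `Σ_v |A_H^v| = |A| |H|`. -/
lemma sum_cardAH (A : Finset (Fin n → ZMod p)) (H : Submodule (ZMod p) (Fin n → ZMod p)) :
    ∑ v : Fin n → ZMod p, (cardAH p n (↑A) H v : ℝ) = (A.card : ℝ) * (Nat.card H : ℝ) := by
  classical
  have h := sum_cardAH_sub (↑A) (le_top (a := H)) (0 : Fin n → ZMod p)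
  have hT : Hs (⊤ : Submodule (ZMod p) (Fin n → ZMod p)) = Finset.univ := by
    ext x
    simp [mem_Hs]
  rw [hT] at h
  simp only [zero_add] at h
  rw [h, cardAH_top]
  ring

lemma cardAH_mono {A B : Set (Fin n → ZMod p)} (hAB : A ⊆ B)
    (H : Submodule (ZMod p) (Fin n → ZMod p)) (v : Fin n → ZMod p) :
    cardAH p n A H v ≤ cardAH p n B H v := by
  classical
  apply Finset.card_le_card
  intro x hx
  simp only [Finset.mem_filter] at hx ⊢
  exact ⟨hx.1, hx.2.1, hAB hx.2.2⟩

/-- `ftH` of `indAH` as a sum over `Hs H`. -/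
lemma ftH_indAH (A : Set (Fin n → ZMod p)) (H : Submodule (ZMod p) (Fin n → ZMod p))
    (v ξ : Fin n → ZMod p) :
    ftH p n H (indAH p n A H v) ξ
      = (Nat.card H : ℂ)⁻¹ * ∑ z ∈ Hs H, indAH p n A H v z * eC (-bracket p n z ξ) := by
  classical
  rw [ftH, Hs]

/-- Translation: for `h ∈ H`, `‖Â_H^{v+h}(ξ)‖ = ‖Â_H^v(ξ)‖`. -/
lemma norm_ftH_translate (A : Set (Fin n → ZMod p)) {H : Submodule (ZMod p) (Fin n → ZMod p)}
    {h : Fin n → ZMod p} (hh : h ∈ H) (v ξ : Fin n → ZMod p) :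
    ‖ftH p n H (indAH p n A H (v + h)) ξ‖ = ‖ftH p n H (indAH p n A H v) ξ‖ := by
  classical
  rw [ftH_indAH, ftH_indAH]
  have key : ∑ z ∈ Hs H, indAH p n A H (v + h) z * eC (-bracket p n z ξ)
      = ∑ z ∈ Hs H, eC (-bracket p n h ξ) * (indAH p n A H v z * eC (-bracket p n z ξ)) := by
    refine Finset.sum_equiv (Equiv.subRight h) ?_ ?_
    · intro y
      simp only [mem_Hs, Equiv.subRight_apply]
      constructor
      · intro hy; exact H.sub_mem hy hh
      · intro hy; simpa using H.add_mem hy hh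
    · intro y hy
      rw [mem_Hs] at hy
      simp only [Equiv.subRight_apply]
      have harg : y - (v + h) = y - h - v := by abel
      have hcond : (y ∈ H ∧ y - (v + h) ∈ A) ↔ (y - h ∈ H ∧ y - h - v ∈ A) := by
        rw [harg]
        constructor
        · rintro ⟨h1, h2⟩; exact ⟨H.sub_mem h1 hh, h2⟩
        · rintro ⟨h1, h2⟩; exact ⟨by simpa using H.add_mem h1 hh, h2⟩
      have hind : indAH p n A H (v + h) y = indAH p n A H v (y - h) := by
        rw [indAH, indAH]
        exact if_congr hcond rfl rfl
      have hbr : eC (-bracket p n y ξ) = eC (-bracket p n (y - h) ξ) * eC (-bracket p n h ξ) := by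
        rw [← eC_neg_bracket_add, sub_add_cancel]
      rw [hind, hbr]
      ring
  rw [key, ← Finset.mul_sum, norm_mul, norm_mul, norm_mul, norm_eC, one_mul]

lemma regVec_translate {ε : ℝ} {A : Finset (Fin n → ZMod p)}
    {H : Submodule (ZMod p) (Fin n → ZMod p)} {h : Fin n → ZMod p} (hh : h ∈ H)
    {v : Fin n → ZMod p} (hv : regVec p n ε A H v) : regVec p n ε A H (v + h) := by
  intro ξ hξ
  rw [norm_ftH_translate (↑A) hh v ξ]
  exact hv ξ hξ

/-- Bessel-type inequality for two orthogonal "characters" (constant & χ). -/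
lemma bessel {ι : Type*} (s : Finset ι) (g : ι → ℝ) (χ : ι → ℂ)
    (hnorm : ∀ i ∈ s, χ i * (starRingEnd ℂ) (χ i) = 1) (hsum : ∑ i ∈ s, χ i = 0) :
    (∑ i ∈ s, g i) ^ 2 + ‖∑ i ∈ s, (g i : ℂ) * (starRingEnd ℂ) (χ i)‖ ^ 2
      ≤ s.card * ∑ i ∈ s, g i ^ 2 := by
  classical
  rcases Finset.eq_empty_or_nonempty s with rfl | hs
  · simp
  set m := s.card with hm0
  have hm : 0 < (m : ℝ) := by exact_mod_cast Finset.card_pos.mpr hs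
  set S : ℂ := ∑ i ∈ s, (g i : ℂ) with hS
  set T : ℂ := ∑ i ∈ s, (g i : ℂ) * (starRingEnd ℂ) (χ i) with hT
  set M : ℂ := (m : ℂ) with hM
  have hSconj : (starRingEnd ℂ) S = S := by
    rw [hS, map_sum]
    apply Finset.sum_congr rfl
    intro i _
    exact Complex.conj_ofReal _
  have hTχ : ∑ i ∈ s, (g i : ℂ) * χ i = (starRingEnd ℂ) T := by
    rw [hT, map_sum]
    apply Finset.sum_congr rfl
    intro i _
    rw [map_mul, Complex.conj_ofReal, Complex.conj_conj]
  have hχconj : ∑ i ∈ s, (starRingEnd ℂ) (χ i) = 0 := by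
    rw [← map_sum, hsum, map_zero]
  have expand : ∀ i ∈ s,
      (M * (g i : ℂ) - S - T * χ i) * (starRingEnd ℂ) (M * (g i : ℂ) - S - T * χ i)
        = M ^ 2 * (g i : ℂ) ^ 2 - (2 * M * S) * (g i : ℂ)
          - (M * (starRingEnd ℂ) T) * ((g i : ℂ) * (starRingEnd ℂ) (χ i))
          - (M * T) * ((g i : ℂ) * χ i) + S ^ 2
          + (S * (starRingEnd ℂ) T) * (starRingEnd ℂ) (χ i)
          + (S * T) * χ i + (T * (starRingEnd ℂ) T) * (χ i * (starRingEnd ℂ) (χ i)) := by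
    intro i hi
    have h1 : (starRingEnd ℂ) (M * (g i : ℂ) - S - T * χ i)
        = M * (g i : ℂ) - S - (starRingEnd ℂ) T * (starRingEnd ℂ) (χ i) := by
      rw [map_sub, map_sub, map_mul, map_mul, hSconj, Complex.conj_ofReal, hM]
      norm_num
    rw [h1]
    ring
  have hχnormsum : ∑ i ∈ s, χ i * (starRingEnd ℂ) (χ i) = M := by
    rw [Finset.sum_congr rfl hnorm, Finset.sum_const, hM, hm0, nsmul_eq_mul, mul_one]
  have hsumid : ∑ i ∈ s, (M * (g i : ℂ) - S - T * χ i)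
        * (starRingEnd ℂ) (M * (g i : ℂ) - S - T * χ i)
      = M ^ 2 * (∑ i ∈ s, (g i : ℂ) ^ 2) - M * S ^ 2 - M * (T * (starRingEnd ℂ) T) := by
    rw [Finset.sum_congr rfl expand]
    simp only [Finset.sum_add_distrib, Finset.sum_sub_distrib, ← Finset.mul_sum,
      hχconj, hTχ, hχnormsum, hsum, ← hS, ← hT, Finset.sum_const, nsmul_eq_mul, ← hM,
      mul_zero, add_zero]
    ring
  have hpos : 0 ≤ (∑ i ∈ s, (M * (g i : ℂ) - S - T * χ i)
      * (starRingEnd ℂ) (M * (g i : ℂ) - S - T * χ i)).re := by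
    rw [Complex.re_sum]
    apply Finset.sum_nonneg
    intro i hi
    rw [Complex.mul_conj]
    simp [Complex.normSq_nonneg]
  rw [hsumid] at hpos
  have hgsq : ∑ i ∈ s, (g i : ℂ) ^ 2 = ((∑ i ∈ s, g i ^ 2 : ℝ) : ℂ) := by push_cast; rfl
  have hS' : S = ((∑ i ∈ s, g i : ℝ) : ℂ) := by rw [hS]; push_cast; rfl
  have hTT : T * (starRingEnd ℂ) T = ((‖T‖ ^ 2 : ℝ) : ℂ) := by
    rw [Complex.mul_conj]
    norm_cast
    exact (Complex.sq_norm T).symm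
  rw [hgsq, hS', hTT, hM] at hpos
  have hmc : ((m : ℕ) : ℂ) = (((m : ℝ)) : ℂ) := by push_cast; rfl
  rw [hmc, ← Complex.ofReal_pow, ← Complex.ofReal_mul, ← Complex.ofReal_pow,
    ← Complex.ofReal_mul, ← Complex.ofReal_mul, ← Complex.ofReal_sub, ← Complex.ofReal_sub,
    Complex.ofReal_re] at hpos
  have h4 : (m : ℝ) * 0 ≤ (m : ℝ) * ((m : ℝ) * (∑ i ∈ s, g i ^ 2)
      - (∑ i ∈ s, g i) ^ 2 - ‖T‖ ^ 2) := by
    rw [mul_zero]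
    nlinarith [hpos]
  have h5 := le_of_mul_le_mul_left h4 hm
  linarith

/-! ### Index counting lemmas -/

lemma card_le_inf_ker (H : Submodule (ZMod p) (Fin n → ZMod p))
    (f : (Fin n → ZMod p) →ₗ[ZMod p] ZMod p) :
    Nat.card H ≤ Nat.card ↥(H ⊓ LinearMap.ker f) * p := by
  classical
  set f' := f.comp H.subtype with hf'
  have h1 : Nat.card ↥H = Nat.card ↥(LinearMap.ker f') * Nat.card (↥H ⧸ LinearMap.ker f') :=
    Submodule.card_eq_card_quotient_mul_card _
  have h2 : Nat.card (↥H ⧸ LinearMap.ker f') = Nat.card ↥(LinearMap.range f') :=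
    Nat.card_congr f'.quotKerEquivRange.toEquiv
  have h3 : Nat.card ↥(LinearMap.range f') ≤ p := by
    have h := Nat.card_le_card_of_injective (Subtype.val : ↥(LinearMap.range f') → ZMod p)
      Subtype.val_injective
    simpa [Nat.card_zmod] using h
  have h4 : Nat.card ↥(LinearMap.ker f') = Nat.card ↥(H ⊓ LinearMap.ker f) := by
    have hker : LinearMap.ker f' = (H ⊓ LinearMap.ker f).comap H.subtype := by
      ext x
      simp [hf', LinearMap.mem_ker, Submodule.mem_comap, x.2]
    rw [hker]
    exact Nat.card_congr (Submodule.comapSubtypeEquivOfLe inf_le_left).toEquiv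
  calc Nat.card ↥H = Nat.card ↥(LinearMap.ker f') * Nat.card (↥H ⧸ LinearMap.ker f') := h1
    _ ≤ Nat.card ↥(LinearMap.ker f') * p := Nat.mul_le_mul_left _ (h2 ▸ h3)
    _ = Nat.card ↥(H ⊓ LinearMap.ker f) * p := by rw [h4]

lemma card_le_inf_kers {ι : Type*} (H : Submodule (ZMod p) (Fin n → ZMod p))
    (s : Finset ι) (f : ι → ((Fin n → ZMod p) →ₗ[ZMod p] ZMod p)) :
    Nat.card H ≤ Nat.card ↥(H ⊓ s.inf fun i => LinearMap.ker (f i)) * p ^ s.card := by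
  classical
  induction s using Finset.cons_induction with
  | empty => simp
  | cons a s ha ih =>
    have hstep := card_le_inf_ker (H ⊓ s.inf fun i => LinearMap.ker (f i)) (f a)
    have heq : (H ⊓ s.inf fun i => LinearMap.ker (f i)) ⊓ LinearMap.ker (f a)
        = H ⊓ (Finset.cons a s ha).inf fun i => LinearMap.ker (f i) := by
      rw [Finset.inf_cons, inf_comm (LinearMap.ker (f a)), inf_assoc]
    rw [Finset.card_cons, pow_succ]
    calc Nat.card H ≤ Nat.card ↥(H ⊓ s.inf fun i => LinearMap.ker (f i)) * p ^ s.card := ih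
      _ ≤ (Nat.card ↥((H ⊓ s.inf fun i => LinearMap.ker (f i)) ⊓ LinearMap.ker (f a)) * p)
            * p ^ s.card := Nat.mul_le_mul_right _ hstep
      _ = Nat.card ↥(H ⊓ (Finset.cons a s ha).inf fun i => LinearMap.ker (f i))
            * (p ^ s.card * p) := by rw [heq]; ring

lemma quot_card_mul (H : Submodule (ZMod p) (Fin n → ZMod p)) :
    Nat.card ((Fin n → ZMod p) ⧸ H) * Nat.card H = Fintype.card (Fin n → ZMod p) := by
  rw [← Nat.card_eq_fintype_card, Submodule.card_eq_card_quotient_mul_card H, Nat.mul_comm]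

lemma index_le_of_card_le {H H' : Submodule (ZMod p) (Fin n → ZMod p)} (k : ℕ)
    (h : Nat.card H ≤ Nat.card H' * k) :
    Nat.card ((Fin n → ZMod p) ⧸ H') ≤ Nat.card ((Fin n → ZMod p) ⧸ H) * k := by
  have h1 := quot_card_mul (p := p) (n := n) H
  have h2 := quot_card_mul (p := p) (n := n) H'
  have hH' : 0 < Nat.card H' := card_H_pos H'
  have key : Nat.card ((Fin n → ZMod p) ⧸ H') * Nat.card H'
      ≤ (Nat.card ((Fin n → ZMod p) ⧸ H) * k) * Nat.card H' := by
    calc Nat.card ((Fin n → ZMod p) ⧸ H') * Nat.card H' = Fintype.card (Fin n → ZMod p) := h2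
      _ = Nat.card ((Fin n → ZMod p) ⧸ H) * Nat.card H := h1.symm
      _ ≤ Nat.card ((Fin n → ZMod p) ⧸ H) * (Nat.card H' * k) := Nat.mul_le_mul_left _ h
      _ = (Nat.card ((Fin n → ZMod p) ⧸ H) * k) * Nat.card H' := by ring
  exact Nat.le_of_mul_le_mul_right key hH'

lemma card_top_eq : (Nat.card (⊤ : Submodule (ZMod p) (Fin n → ZMod p)) : ℕ)
    = Fintype.card (Fin n → ZMod p) := by
  rw [Nat.card_congr (Submodule.topEquiv (R := ZMod p) (M := Fin n → ZMod p)).toEquiv,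
    Nat.card_eq_fintype_card]

lemma index_top_eq : Nat.card ((Fin n → ZMod p) ⧸ (⊤ : Submodule (ZMod p) (Fin n → ZMod p))) = 1 := by
  have h := quot_card_mul (p := p) (n := n) ⊤
  rw [card_top_eq] at h
  have hN : 0 < Fintype.card (Fin n → ZMod p) := Fintype.card_pos
  have := Nat.eq_of_mul_eq_mul_right hN (h.trans (one_mul _).symm)
  exact this

/-! ### Tower lemmas -/

lemma tower_pos (hp0 : 0 < p) (t : ℕ) : 0 < tower p t := by
  induction t with
  | zero => simp [tower]; omega
  | succ t ih => exact pow_pos (by omega) _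

lemma tower_le_succ (hp0 : 0 < p) (t : ℕ) : tower p t ≤ tower p (t + 1) := by
  have h1 : tower p t < 2 ^ tower p t := Nat.lt_two_pow_self
  have h2 : (2 : ℕ) ^ tower p t ≤ (2 * p) ^ tower p t :=
    Nat.pow_le_pow_left (by omega) _
  calc tower p t ≤ 2 ^ tower p t := h1.le
    _ ≤ (2 * p) ^ tower p t := h2
    _ = tower p (t + 1) := rfl

lemma tower_mono (hp0 : 0 < p) : Monotone (tower p) :=
  monotone_nat_of_le_succ (tower_le_succ hp0)

/-! ### Local inequalities -/

lemma local_good (A : Set (Fin n → ZMod p)) {H' H : Submodule (ZMod p) (Fin n → ZMod p)}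
    (hH' : H' ≤ H) (v : Fin n → ZMod p) :
    ((Nat.card H' : ℝ) * (cardAH p n A H v : ℝ)) ^ 2
      ≤ (Nat.card H : ℝ) * ∑ h ∈ Hs H, (cardAH p n A H' (v + h) : ℝ) ^ 2 := by
  have h := sq_sum_le_card_mul_sum_sq (s := Hs H)
    (f := fun h => (cardAH p n A H' (v + h) : ℝ))
  rw [card_Hs, sum_cardAH_sub A hH' v] at h
  exact h

lemma norm_Z_eq (A : Set (Fin n → ZMod p)) (H : Submodule (ZMod p) (Fin n → ZMod p))
    (v ξ : Fin n → ZMod p) :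
    ‖∑ z ∈ Hs H, indAH p n A H v z * eC (-bracket p n z ξ)‖
      = (Nat.card H : ℝ) * ‖ftH p n H (indAH p n A H v) ξ‖ := by
  have hc : (0 : ℝ) < (Nat.card H : ℝ) := by exact_mod_cast card_H_pos H
  rw [ftH_indAH, norm_mul]
  rw [norm_inv]
  rw [Complex.norm_natCast]
  field_simp

lemma local_bad (hp : p.Prime) (A : Set (Fin n → ZMod p))
    {H' H : Submodule (ZMod p) (Fin n → ZMod p)} (hH' : H' ≤ H) {ξ : Fin n → ZMod p}
    (hker : ∀ x ∈ H', (∑ i, x i * ξ i : ZMod p) = 0)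
    (hnt : ¬ ∀ h ∈ H, (∑ i, h i * ξ i : ZMod p) = 0) (v : Fin n → ZMod p) :
    ((Nat.card H' : ℝ) * (cardAH p n A H v : ℝ)) ^ 2
      + ((Nat.card H' : ℝ) * ((Nat.card H : ℝ) * ‖ftH p n H (indAH p n A H v) ξ‖)) ^ 2
      ≤ (Nat.card H : ℝ) * ∑ h ∈ Hs H, (cardAH p n A H' (v + h) : ℝ) ^ 2 := by
  have hb := bessel (Hs H) (fun h => (cardAH p n A H' (v + h) : ℝ))
    (fun h => eC (bracket p n h ξ)) (fun h _ => eC_mul_conj _) (sum_eC_bracket hp hnt)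
  rw [card_Hs] at hb
  have hS1 := sum_cardAH_sub A hH' v
  have hSχ : ∑ h ∈ Hs H, ((cardAH p n A H' (v + h) : ℝ) : ℂ)
        * (starRingEnd ℂ) (eC (bracket p n h ξ))
      = (Nat.card H' : ℂ) *
        (starRingEnd ℂ) (∑ z ∈ Hs H, indAH p n A H v z * eC (-bracket p n z ξ)) := by
    rw [← conv_identity A hH' hker v]
    apply Finset.sum_congr rfl
    intro h _
    rw [eC_conj]
    norm_cast
  rw [hS1, hSχ] at hb
  rw [norm_mul, Complex.norm_natCast, RCLike.norm_conj, norm_Z_eq] at hb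
  simpa [mul_pow] using hb

lemma sum_shift_subspace (G : (Fin n → ZMod p) → ℝ) (H : Submodule (ZMod p) (Fin n → ZMod p)) :
    ∑ v : Fin n → ZMod p, ∑ h ∈ Hs H, G (v + h)
      = (Nat.card H : ℝ) * ∑ w : Fin n → ZMod p, G w := by
  rw [Finset.sum_comm]
  have h : ∀ h ∈ Hs H, ∑ v : Fin n → ZMod p, G (v + h) = ∑ w : Fin n → ZMod p, G w := by
    intro h _
    exact Fintype.sum_equiv (Equiv.addRight h) _ _ (fun v => rfl)
  rw [Finset.sum_congr rfl h, Finset.sum_const, card_Hs, nsmul_eq_mul]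

open Classical in
/-- Energy increment: if every irregular vector admits a witness character that is
trivial on `H'`, then the mean-square density increases. -/
lemma increment (hp : p.Prime) {ε : ℝ} (hε : 0 < ε) (A : Finset (Fin n → ZMod p))
    {H H' : Submodule (ZMod p) (Fin n → ZMod p)} (hH' : H' ≤ H)
    (hsel : ∀ v : Fin n → ZMod p, ¬ regVec p n ε A H v → ∃ ξ : Fin n → ZMod p,
        (∀ x ∈ H', (∑ i, x i * ξ i : ZMod p) = 0) ∧
        (¬ ∀ h ∈ H, (∑ i, h i * ξ i : ZMod p) = 0) ∧
        ε * A.card / (Fintype.card (Fin n → ZMod p) : ℝ)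
          ≤ ‖ftH p n H (indAH p n (↑A) H v) ξ‖) :
    (∑ v : Fin n → ZMod p, ((cardAH p n (↑A) H v : ℝ) / (Nat.card H : ℝ)) ^ 2)
      + ((Finset.univ.filter (fun v : Fin n → ZMod p => ¬ regVec p n ε A H v)).card : ℝ)
        * (ε * A.card / (Fintype.card (Fin n → ZMod p) : ℝ)) ^ 2
      ≤ ∑ v : Fin n → ZMod p, ((cardAH p n (↑A) H' v : ℝ) / (Nat.card H' : ℝ)) ^ 2 := by
  classical
  set N := (Fintype.card (Fin n → ZMod p) : ℝ) with hNdef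
  have hN : (0 : ℝ) < N := by
    rw [hNdef]; exact_mod_cast Fintype.card_pos
  set cH := (Nat.card H : ℝ) with hcHdef
  set cH' := (Nat.card H' : ℝ) with hcH'def
  have hcHpos : 0 < cH := by rw [hcHdef]; exact_mod_cast card_H_pos H
  have hcH'pos : 0 < cH' := by rw [hcH'def]; exact_mod_cast card_H_pos H'
  set c₀ := ε * A.card / N with hc₀def
  have hc₀ : 0 ≤ c₀ := by
    rw [hc₀def]
    exact div_nonneg (mul_nonneg hε.le (Nat.cast_nonneg _)) hN.le
  have key : ∀ v : Fin n → ZMod p,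
      ((cardAH p n (↑A) H v : ℝ) / cH) ^ 2 + (if ¬ regVec p n ε A H v then c₀ ^ 2 else 0)
        ≤ cH⁻¹ * ∑ h ∈ Hs H, ((cardAH p n (↑A) H' (v + h) : ℝ) / cH') ^ 2 := by
    intro v
    have hrw : ∑ h ∈ Hs H, ((cardAH p n (↑A) H' (v + h) : ℝ) / cH') ^ 2
        = (∑ h ∈ Hs H, (cardAH p n (↑A) H' (v + h) : ℝ) ^ 2) / cH' ^ 2 := by
      rw [Finset.sum_div]
      exact Finset.sum_congr rfl (fun h _ => div_pow _ _ _)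
    rw [hrw]
    set X := (cardAH p n (↑A) H v : ℝ) with hX
    set B := ∑ h ∈ Hs H, (cardAH p n (↑A) H' (v + h) : ℝ) ^ 2 with hB
    have hBnn : 0 ≤ B := Finset.sum_nonneg (fun h _ => sq_nonneg _)
    by_cases hv : regVec p n ε A H v
    · rw [if_neg (fun hc => hc hv), add_zero, ← sub_nonneg]
      have h := local_good (↑A) hH' v
      have expand : cH⁻¹ * (B / cH' ^ 2) - (X / cH) ^ 2
          = ((cH * B) - (cH' * X) ^ 2) / (cH ^ 2 * cH' ^ 2) := by
        field_simp
      rw [expand]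
      apply div_nonneg _ (by positivity)
      rw [sub_nonneg]
      exact h
    · rw [if_pos hv, ← sub_nonneg]
      obtain ⟨ξ, hker, hnt, hbig⟩ := hsel v hv
      have h := local_bad hp (↑A) hH' hker hnt v
      set F := ‖ftH p n H (indAH p n (↑A) H v) ξ‖ with hF
      have expand : cH⁻¹ * (B / cH' ^ 2) - ((X / cH) ^ 2 + c₀ ^ 2)
          = ((cH * B) - ((cH' * X) ^ 2 + (cH' * (cH * c₀)) ^ 2)) / (cH ^ 2 * cH' ^ 2) := by
        field_simp
      rw [expand]
      apply div_nonneg _ (by positivity)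
      rw [sub_nonneg]
      have hc₀F : c₀ ^ 2 ≤ F ^ 2 := by nlinarith [hbig, hc₀]
      have hterm : (cH' * (cH * c₀)) ^ 2 ≤ (cH' * (cH * F)) ^ 2 := by nlinarith [hc₀F, sq_nonneg (cH' * cH), hcHpos, hcH'pos]
      linarith [h, hterm]
  have hsum := Finset.sum_le_sum (fun v (_ : v ∈ (Finset.univ : Finset (Fin n → ZMod p))) => key v)
  rw [Finset.sum_add_distrib] at hsum
  have hbad : ∑ v : Fin n → ZMod p, (if ¬ regVec p n ε A H v then c₀ ^ 2 else 0)
      = ((Finset.univ.filter (fun v : Fin n → ZMod p => ¬ regVec p n ε A H v)).card : ℝ)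
          * c₀ ^ 2 := by
    rw [← Finset.sum_filter, Finset.sum_const, nsmul_eq_mul]
  rw [hbad] at hsum
  have hrhs : ∑ v : Fin n → ZMod p, cH⁻¹ * ∑ h ∈ Hs H,
        ((cardAH p n (↑A) H' (v + h) : ℝ) / cH') ^ 2
      = ∑ w : Fin n → ZMod p, ((cardAH p n (↑A) H' w : ℝ) / cH') ^ 2 := by
    rw [← Finset.mul_sum,
      sum_shift_subspace (fun w => ((cardAH p n (↑A) H' w : ℝ) / cH') ^ 2) H,
      ← mul_assoc, inv_mul_cancel₀ (ne_of_gt hcHpos), one_mul]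
  rw [hrhs] at hsum
  exact hsum

end Aux

set_option maxHeartbeats 3000000 in
open Classical in
/-- Green-type regularity lemma for sparse Cayley graphs.  For
`α, ε ∈ (0,1)` there is `σ = σ(ε,α) > 0` such that for every `n`, every
σ-regular set `R ⊆ F_p^n` (quantitatively: `|R_H^v| ≤ 2|R||H|/N` whenever
`|H| ≥ σN`) and every `A ⊆ R` with `|A| = α|R|`, there is a subspace `H` of
index at most `W(4ε^{-3}α^{-2})` which is ε-regular for `A` (at most `εN`
vectors fail to be ε-regular). -/
theorem green_regularity {p : ℕ} [NeZero p] (hp : p.Prime) (hodd : Odd p)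
    (α ε : ℝ) (hα : 0 < α) (hα1 : α < 1) (hε : 0 < ε) (hε1 : ε < 1) :
    ∃ σ : ℝ, 0 < σ ∧
      ∀ (n : ℕ) (R A : Finset (Fin n → ZMod p)),
        (∀ (H : Submodule (ZMod p) (Fin n → ZMod p)) (v : Fin n → ZMod p),
          σ * (Fintype.card (Fin n → ZMod p) : ℝ) ≤ (Nat.card H : ℝ) →
          (cardAH p n (↑R) H v : ℝ)
            ≤ 2 * R.card * (Nat.card H : ℝ) / (Fintype.card (Fin n → ZMod p) : ℝ)) →
        A ⊆ R → (A.card : ℝ) = α * R.card →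
        ∃ H : Submodule (ZMod p) (Fin n → ZMod p),
          Nat.card ((Fin n → ZMod p) ⧸ H) ≤ tower p ⌈4 * ε⁻¹ ^ 3 * α⁻¹ ^ 2⌉₊ ∧
          ((Finset.univ.filter
              (fun v : Fin n → ZMod p => ¬ regVec p n ε A H v)).card : ℝ)
            ≤ ε * (Fintype.card (Fin n → ZMod p) : ℝ) := by
  classical
  have hp2 : 0 < p := hp.pos
  set t := ⌈4 * ε⁻¹ ^ 3 * α⁻¹ ^ 2⌉₊ with ht
  refine ⟨(tower p (t + 1) : ℝ)⁻¹, inv_pos.mpr (by exact_mod_cast tower_pos hp2 (t + 1)), ?_⟩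
  intro n R A hreg hAR hcardA
  set N := (Fintype.card (Fin n → ZMod p) : ℝ) with hNdef
  have hN : (0 : ℝ) < N := by rw [hNdef]; exact_mod_cast Fintype.card_pos
  by_cases hA0 : A.card = 0
  · -- A is empty: H = ⊤ works
    refine ⟨⊤, ?_, ?_⟩
    · rw [index_top_eq]
      exact_mod_cast tower_pos hp2 t
    · have hAe : A = ∅ := Finset.card_eq_zero.mp hA0
      have hall : ∀ v : Fin n → ZMod p, regVec p n ε A ⊤ v := by
        intro v ξ _
        have hzero : ∀ z : Fin n → ZMod p, indAH p n (↑A) ⊤ v z = 0 := by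
          intro z
          rw [indAH, if_neg]
          rintro ⟨_, hz⟩
          rw [hAe] at hz
          simp at hz
        rw [ftH_indAH, Finset.sum_congr rfl (fun z _ => by rw [hzero z, zero_mul]),
          Finset.sum_const_zero, mul_zero, norm_zero, hA0]
        positivity
      have : (Finset.univ.filter
          (fun v : Fin n → ZMod p => ¬ regVec p n ε A ⊤ v)) = ∅ := by
        apply Finset.filter_eq_empty_iff.mpr
        intro v _
        exact not_not_intro (hall v)
      rw [this]
      simp only [Finset.card_empty, Nat.cast_zero]
      positivity
  -- A nonempty
  have hA0' : (0 : ℝ) < A.card := by exact_mod_cast Nat.pos_of_ne_zero hA0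
  have hAsub : (↑A : Set (Fin n → ZMod p)) ⊆ (↑R : Set (Fin n → ZMod p)) := by
    exact_mod_cast hAR
  -- The main induction
  have main : ∀ j : ℕ, j ≤ t + 1 → ∃ H : Submodule (ZMod p) (Fin n → ZMod p),
      (Nat.card ((Fin n → ZMod p) ⧸ H) ≤ tower p t ∧
        ((Finset.univ.filter (fun v : Fin n → ZMod p => ¬ regVec p n ε A H v)).card : ℝ)
          ≤ ε * N) ∨
      (Nat.card ((Fin n → ZMod p) ⧸ H) ≤ tower p j ∧
        (A.card : ℝ) ^ 2 / N * (1 + j * ε ^ 3)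
          ≤ ∑ v : Fin n → ZMod p,
              ((cardAH p n (↑A) H v : ℝ) / (Nat.card H : ℝ)) ^ 2) := by
    intro j
    induction j with
    | zero =>
      intro _
      refine ⟨⊤, Or.inr ⟨?_, ?_⟩⟩
      · rw [index_top_eq]
        exact_mod_cast tower_pos hp2 0
      · have hct : ((Nat.card (⊤ : Submodule (ZMod p) (Fin n → ZMod p)) : ℕ) : ℝ) = N := by
          rw [hNdef]; exact_mod_cast card_top_eq (p := p) (n := n)
        have hΦtop : ∑ v : Fin n → ZMod p,
            ((cardAH p n (↑A) ⊤ v : ℝ) / (Nat.card (⊤ : Submodule (ZMod p) (Fin n → ZMod p)) : ℝ)) ^ 2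
            = (A.card : ℝ) ^ 2 / N := by
          rw [Finset.sum_congr rfl (fun v _ => by rw [cardAH_top, hct]),
            Finset.sum_const, Finset.card_univ, nsmul_eq_mul, ← hNdef]
          field_simp
        rw [hΦtop]
        simp
    | succ j ih =>
      intro hj
      obtain ⟨H, hH⟩ := ih (by omega)
      rcases hH with good | ⟨hidx, hΦ⟩
      · exact ⟨H, Or.inl good⟩
      by_cases hgood : ((Finset.univ.filter
          (fun v : Fin n → ZMod p => ¬ regVec p n ε A H v)).card : ℝ) ≤ ε * N
      · exact ⟨H, Or.inl ⟨le_trans hidx (tower_mono hp2 (by omega)), hgood⟩⟩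
      push_neg at hgood
      -- construct the refined subspace
      have hrep : ∀ q : (Fin n → ZMod p) ⧸ H, ∃ v : Fin n → ZMod p,
          Submodule.Quotient.mk v = q := fun q => Submodule.Quotient.mk_surjective H q
      choose rep hrepspec using hrep
      set P : (Fin n → ZMod p) → (Fin n → ZMod p) → Prop := fun w ξ =>
        (¬ ∀ h ∈ H, (∑ i, h i * ξ i : ZMod p) = 0) ∧
        ε * A.card / N < ‖ftH p n H (indAH p n (↑A) H w) ξ‖ with hPdef
      set Ξ : ((Fin n → ZMod p) ⧸ H) → (Fin n → ZMod p) :=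
        fun q => if hq : ∃ ξ, P (rep q) ξ then hq.choose else 0 with hΞdef
      set H' := H ⊓ (Finset.univ : Finset ((Fin n → ZMod p) ⧸ H)).inf
        (fun q => LinearMap.ker (dotL (Ξ q))) with hH'def
      have hH'le : H' ≤ H := inf_le_left
      have hsel : ∀ v : Fin n → ZMod p, ¬ regVec p n ε A H v → ∃ ξ : Fin n → ZMod p,
          (∀ x ∈ H', (∑ i, x i * ξ i : ZMod p) = 0) ∧
          (¬ ∀ h ∈ H, (∑ i, h i * ξ i : ZMod p) = 0) ∧
          ε * A.card / (Fintype.card (Fin n → ZMod p) : ℝ)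
            ≤ ‖ftH p n H (indAH p n (↑A) H v) ξ‖ := by
        intro v hv
        set q : (Fin n → ZMod p) ⧸ H := Submodule.Quotient.mk v with hq
        have hvrep : v - rep q ∈ H := by
          rw [← Submodule.Quotient.eq]
          rw [hrepspec q]
        have hrepbad : ¬ regVec p n ε A H (rep q) := by
          intro hregv
          apply hv
          have h2 := regVec_translate hvrep hregv
          have h3 : rep q + (v - rep q) = v := by abel
          rwa [h3] at h2
        have hex : ∃ ξ, P (rep q) ξ := by
          rw [regVec] at hrepbad
          push_neg at hrepbad
          obtain ⟨ξ, h1, h2⟩ := hrepbad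
          refine ⟨ξ, ?_, h2⟩
          push_neg
          exact h1
        have hspec : P (rep q) (Ξ q) := by
          rw [show Ξ q = hex.choose from dif_pos hex]
          exact hex.choose_spec
        refine ⟨Ξ q, ?_, hspec.1, ?_⟩
        · intro x hx
          have hle : H' ≤ LinearMap.ker (dotL (Ξ q)) :=
            le_trans inf_le_right (Finset.inf_le (Finset.mem_univ q))
          have hx2 := hle hx
          rw [LinearMap.mem_ker] at hx2
          exact hx2
        · have heqnorm : ‖ftH p n H (indAH p n (↑A) H v) (Ξ q)‖
              = ‖ftH p n H (indAH p n (↑A) H (rep q)) (Ξ q)‖ := by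
            conv_lhs => rw [show v = rep q + (v - rep q) by abel]
            rw [norm_ftH_translate (↑A) hvrep (rep q) (Ξ q)]
          rw [heqnorm]
          exact hspec.2.le
      -- index bound
      have hidx' : Nat.card ((Fin n → ZMod p) ⧸ H') ≤ tower p (j + 1) := by
        have h1 : Nat.card ((Fin n → ZMod p) ⧸ H')
            ≤ Nat.card ((Fin n → ZMod p) ⧸ H)
              * p ^ (Fintype.card ((Fin n → ZMod p) ⧸ H)) := by
          apply index_le_of_card_le
          have h2 := card_le_inf_kers H
            (Finset.univ : Finset ((Fin n → ZMod p) ⧸ H)) (fun q => dotL (Ξ q))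
          rw [Finset.card_univ] at h2
          exact h2
        have hcardQ : Fintype.card ((Fin n → ZMod p) ⧸ H) ≤ tower p j := by
          rw [← Nat.card_eq_fintype_card]
          exact hidx
        have h3 : Nat.card ((Fin n → ZMod p) ⧸ H')
            ≤ tower p j * p ^ tower p j :=
          le_trans h1 (Nat.mul_le_mul hidx (Nat.pow_le_pow_right hp2 hcardQ))
        have h4 : tower p j * p ^ tower p j ≤ tower p (j + 1) := by
          have h5 : tower p j ≤ 2 ^ tower p j := (Nat.lt_two_pow_self).le
          calc tower p j * p ^ tower p j ≤ 2 ^ tower p j * p ^ tower p j :=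
                Nat.mul_le_mul_right _ h5
            _ = (2 * p) ^ tower p j := (Nat.mul_pow 2 p _).symm
            _ = tower p (j + 1) := rfl
        exact le_trans h3 h4
      refine ⟨H', Or.inr ⟨hidx', ?_⟩⟩
      have hinc := increment hp hε A hH'le hsel
      rw [← hNdef] at hinc
      have hbadge : ε * N * (ε * A.card / N) ^ 2
          ≤ ((Finset.univ.filter
              (fun v : Fin n → ZMod p => ¬ regVec p n ε A H v)).card : ℝ)
            * (ε * A.card / N) ^ 2 := by
        apply mul_le_mul_of_nonneg_right hgood.le
        positivity
      have hstepval : ε * N * (ε * A.card / N) ^ 2 = ε ^ 3 * ((A.card : ℝ) ^ 2 / N) := by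
        field_simp
      have hfinal : (A.card : ℝ) ^ 2 / N * (1 + (j + 1 : ℕ) * ε ^ 3)
          = (A.card : ℝ) ^ 2 / N * (1 + j * ε ^ 3) + ε ^ 3 * ((A.card : ℝ) ^ 2 / N) := by
        push_cast
        ring
      rw [hfinal]
      calc (A.card : ℝ) ^ 2 / N * (1 + j * ε ^ 3) + ε ^ 3 * ((A.card : ℝ) ^ 2 / N)
          ≤ (∑ v : Fin n → ZMod p,
              ((cardAH p n (↑A) H v : ℝ) / (Nat.card H : ℝ)) ^ 2)
            + ((Finset.univ.filter
                (fun v : Fin n → ZMod p => ¬ regVec p n ε A H v)).card : ℝ)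
              * (ε * A.card / N) ^ 2 := by
            apply add_le_add hΦ
            rw [← hstepval]
            exact hbadge
        _ ≤ _ := hinc
  -- apply at t + 1 and rule out the energy branch
  obtain ⟨H, hH⟩ := main (t + 1) le_rfl
  rcases hH with ⟨hidx, hgood⟩ | ⟨hidx, hΦ⟩
  · exact ⟨H, hidx, hgood⟩
  exfalso
  have hcH : (0 : ℝ) < (Nat.card H : ℝ) := by exact_mod_cast card_H_pos H
  have hσH : (tower p (t + 1) : ℝ)⁻¹ * N ≤ (Nat.card H : ℝ) := by
    have hq := quot_card_mul (p := p) (n := n) H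
    have hqR : (Nat.card ((Fin n → ZMod p) ⧸ H) : ℝ) * (Nat.card H : ℝ) = N := by
      rw [hNdef]; exact_mod_cast hq
    have hidxpos : (0 : ℝ) < (Nat.card ((Fin n → ZMod p) ⧸ H) : ℝ) := by
      have := Nat.card_pos (α := (Fin n → ZMod p) ⧸ H)
      exact_mod_cast this
    have hidxR : (Nat.card ((Fin n → ZMod p) ⧸ H) : ℝ) ≤ (tower p (t + 1) : ℝ) := by
      exact_mod_cast hidx
    have htowpos : (0 : ℝ) < (tower p (t + 1) : ℝ) := by
      exact_mod_cast tower_pos hp2 (t + 1)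
    rw [inv_mul_le_iff₀ htowpos, ← hqR]
    exact mul_le_mul_of_nonneg_right hidxR hcH.le
  have hXle : ∀ v : Fin n → ZMod p, (cardAH p n (↑A) H v : ℝ)
      ≤ 2 * R.card * (Nat.card H : ℝ) / N := by
    intro v
    refine le_trans ?_ (hreg H v hσH)
    exact_mod_cast cardAH_mono hAsub H v
  have hΦup : ∑ v : Fin n → ZMod p, ((cardAH p n (↑A) H v : ℝ) / (Nat.card H : ℝ)) ^ 2
      ≤ 2 * R.card * A.card / N := by
    have hstep : ∀ v ∈ (Finset.univ : Finset (Fin n → ZMod p)),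
        ((cardAH p n (↑A) H v : ℝ) / (Nat.card H : ℝ)) ^ 2
          ≤ (2 * R.card / N) * ((cardAH p n (↑A) H v : ℝ) / (Nat.card H : ℝ)) := by
      intro v _
      have h1 : (cardAH p n (↑A) H v : ℝ) / (Nat.card H : ℝ) ≤ 2 * R.card / N := by
        rw [div_le_div_iff₀ hcH hN]
        have h2 := hXle v
        rw [le_div_iff₀ hN] at h2
        linarith [h2]
      have h0 : 0 ≤ (cardAH p n (↑A) H v : ℝ) / (Nat.card H : ℝ) := by positivity
      nlinarith [h0, h1]
    calc ∑ v : Fin n → ZMod p, ((cardAH p n (↑A) H v : ℝ) / (Nat.card H : ℝ)) ^ 2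
        ≤ ∑ v : Fin n → ZMod p,
            (2 * R.card / N) * ((cardAH p n (↑A) H v : ℝ) / (Nat.card H : ℝ)) :=
          Finset.sum_le_sum hstep
      _ = (2 * R.card / N) * ((∑ v : Fin n → ZMod p, (cardAH p n (↑A) H v : ℝ))
            / (Nat.card H : ℝ)) := by
          rw [← Finset.mul_sum, ← Finset.sum_div]
      _ = (2 * R.card / N) * (A.card : ℝ) := by
          rw [sum_cardAH, mul_div_assoc, mul_div_cancel_right₀ _ (ne_of_gt hcH)]
      _ = 2 * R.card * A.card / N := by ring
  -- numeric contradiction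
  have htle : (4 * ε⁻¹ ^ 3 * α⁻¹ ^ 2 : ℝ) ≤ (t : ℝ) := by
    rw [ht]
    exact Nat.le_ceil _
  have hεα : (4 * ε⁻¹ ^ 3 * α⁻¹ ^ 2) * ε ^ 3 = 4 / α ^ 2 := by
    field_simp
  have h1 : (1 : ℝ) + 4 / α ^ 2 ≤ 1 + ((t + 1 : ℕ) : ℝ) * ε ^ 3 := by
    have h3 : (4 * ε⁻¹ ^ 3 * α⁻¹ ^ 2 : ℝ) ≤ ((t + 1 : ℕ) : ℝ) := by
      push_cast
      linarith [htle]
    have hε3 : (0 : ℝ) < ε ^ 3 := by positivity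
    calc (1 : ℝ) + 4 / α ^ 2 = 1 + (4 * ε⁻¹ ^ 3 * α⁻¹ ^ 2) * ε ^ 3 := by rw [hεα]
      _ ≤ 1 + ((t + 1 : ℕ) : ℝ) * ε ^ 3 := by nlinarith [h3, hε3]
  have hchain : (A.card : ℝ) ^ 2 / N * (1 + 4 / α ^ 2) ≤ 2 * R.card * A.card / N := by
    have h4 : (A.card : ℝ) ^ 2 / N * (1 + 4 / α ^ 2)
        ≤ (A.card : ℝ) ^ 2 / N * (1 + ((t + 1 : ℕ) : ℝ) * ε ^ 3) := by
      apply mul_le_mul_of_nonneg_left h1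
      positivity
    exact le_trans h4 (le_trans hΦ hΦup)
  have hRA : (R.card : ℝ) = A.card / α := by
    rw [hcardA, mul_div_cancel_left₀ _ (ne_of_gt hα)]
  rw [hRA] at hchain
  -- A²/N (1 + 4/α²) ≤ 2 (A/α) A / N
  have hkey : 1 + 4 / α ^ 2 ≤ 2 / α := by
    have hA2N : (0 : ℝ) < (A.card : ℝ) ^ 2 / N := div_pos (pow_pos hA0' 2) hN
    have h5 : (A.card : ℝ) ^ 2 / N * (1 + 4 / α ^ 2)
        ≤ (A.card : ℝ) ^ 2 / N * (2 / α) := by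
      calc (A.card : ℝ) ^ 2 / N * (1 + 4 / α ^ 2) ≤ 2 * ((A.card : ℝ) / α) * A.card / N :=
            hchain
        _ = (A.card : ℝ) ^ 2 / N * (2 / α) := by
            ring
    exact le_of_mul_le_mul_left (by linarith [h5]) hA2N
  have hα2 : (0 : ℝ) < α ^ 2 := by positivity
  have : α ^ 2 + 4 ≤ 2 * α := by
    have h6 := mul_le_mul_of_nonneg_left hkey hα2.le
    have h7 : α ^ 2 * (1 + 4 / α ^ 2) = α ^ 2 + 4 := by
      field_simp
    have h8 : α ^ 2 * (2 / α) = 2 * α := by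
      field_simp
    linarith [h6, h7.symm.le, h8.le]
  nlinarith [sq_nonneg (α - 1), this]
end

section
/- Roth's theorem in F_p^n with counting: For every δ > 0 there exists c(δ) > 0 such that every subset B of V = F_p^n (p an odd prime) with |B| ≥ δ|V| contains at least c(δ)|V|^2 three-term arithmetic progressions (triples (x,y,z) ∈ B^3 with x + z = 2y). -/
open Finset

open SimpleGraph TripartiteFromTriangles Sum3 in
open Classical in
lemma roth_counting_aux {G : Type*} [AddCommGroup G] [Fintype G] [DecidableEq G]
    (δ : ℝ) (hδ : 0 < δ) (hδ1 : δ ≤ 1) (B : Finset G)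
    (hB : δ * (Fintype.card G : ℝ) ≤ B.card) :
    27 * triangleRemovalBound (δ/9) * (Fintype.card G : ℝ) ^ 2
      ≤ ((Finset.univ.filter (fun t : G × G × G =>
          t.1 ∈ B ∧ t.2.1 ∈ B ∧ t.2.2 ∈ B ∧ t.1 + t.2.2 = t.2.1 + t.2.1)).card : ℝ) := by
  classical
  set N := Fintype.card G with hNdef
  have hN : 0 < N := Fintype.card_pos
  have hNR : (0 : ℝ) < N := by exact_mod_cast hN
  set A : Finset (G × G) := univ.filter (fun x => x.2 - x.1 ∈ B) with hAdef
  have hAcard : (N : ℝ) * B.card = A.card := by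
    norm_cast
    rw [hNdef, ← card_univ, ← card_product]
    exact card_equiv ((Equiv.refl _).prodShear fun a ↦ Equiv.addLeft a) (by simp [A])
  have hA2 : δ * (N : ℝ) ^ 2 ≤ A.card := by
    calc δ * (N : ℝ) ^ 2 = (N : ℝ) * (δ * N) := by ring
    _ ≤ (N : ℝ) * B.card := by
        have := hB; nlinarith
    _ = A.card := hAcard
  set t : Finset (G × G × G) :=
    A.map ⟨fun a => (a.1, a.2, a.1 + a.2), by rintro ⟨x₁, x₂⟩ ⟨y₁, y₂⟩ ⟨⟩; rfl⟩ with htdef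
  have hmem : ∀ a b c : G, (a, b, c) ∈ t ↔ (b - a ∈ B ∧ c = a + b) := by
    intro a b c
    simp only [htdef, mem_map, Function.Embedding.coeFn_mk, Prod.exists, Prod.mk.injEq,
      hAdef, mem_filter, mem_univ, true_and]
    constructor
    · rintro ⟨x, y, hxy, rfl, rfl, rfl⟩; exact ⟨hxy, rfl⟩
    · rintro ⟨h, rfl⟩; exact ⟨a, b, h, rfl⟩
  haveI : ExplicitDisjoint t := by
    constructor
    · intro a b c a' h h'
      rw [hmem] at h h'
      have := h.2.symm.trans h'.2
      exact add_right_cancel this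
    · intro a b c b' h h'
      rw [hmem] at h h'
      exact add_left_cancel (h.2.symm.trans h'.2)
    · intro a b c c' h h'
      rw [hmem] at h h'
      exact h.2.trans h'.2.symm
  have htcard : t.card = A.card := card_map _
  have hfar : (graph t).FarFromTriangleFree (δ/9) := by
    apply farFromTriangleFree
    rw [htcard]
    calc δ/9 * (((Fintype.card G + Fintype.card G + Fintype.card G) ^ 2 : ℕ) : ℝ)
        = δ * (N : ℝ) ^ 2 := by push_cast [← hNdef]; ring
      _ ≤ A.card := hA2
  have hcount := hfar.le_card_cliqueFinset
  set T' : Finset (G × G × G) := univ.filter (fun x =>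
    (graph t).Adj (in₀ x.1) (in₁ x.2.1) ∧ (graph t).Adj (in₀ x.1) (in₂ x.2.2) ∧
      (graph t).Adj (in₁ x.2.1) (in₂ x.2.2)) with hT'def
  have hsub : (graph t).cliqueFinset 3 ⊆ T'.image toTriangle := by
    intro s hs
    rw [mem_cliqueFinset_iff, is3Clique_iff] at hs
    obtain ⟨x, y, z, hxy, hxz, hyz, rfl⟩ := hs
    obtain ⟨a, b, c, habc, hab, hac, hbc⟩ := graph_triple hxy hxz hyz
    exact mem_image.2 ⟨(a, b, c), mem_filter.2 ⟨mem_univ _, hab, hac, hbc⟩, habc⟩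
  set P : Finset (G × G × G) := Finset.univ.filter (fun t : G × G × G =>
    t.1 ∈ B ∧ t.2.1 ∈ B ∧ t.2.2 ∈ B ∧ t.1 + t.2.2 = t.2.1 + t.2.1) with hPdef
  have hT'le : (T'.card : ℝ) ≤ (N : ℝ) * P.card := by
    have : T'.card ≤ ((univ : Finset G) ×ˢ P).card := by
      apply card_le_card_of_injOn
        (fun x => (x.2.1, (x.2.1 + x.2.1 - x.2.2, x.2.1 - x.1, x.2.2 - x.1 - x.1)))
      · rintro ⟨a, b, c⟩ hx
        rw [hT'def, mem_coe, mem_filter] at hx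
        obtain ⟨-, hab, hac, hbc⟩ := hx
        rw [Graph.in₀₁_iff] at hab
        rw [Graph.in₀₂_iff] at hac
        rw [Graph.in₁₂_iff] at hbc
        obtain ⟨c', hc'⟩ := hab
        obtain ⟨b', hb'⟩ := hac
        obtain ⟨a', ha'⟩ := hbc
        rw [hmem] at hc' hb' ha'
        rw [mem_coe, mem_product]
        refine ⟨mem_univ _, ?_⟩
        rw [hPdef, mem_filter]
        dsimp only
        refine ⟨mem_univ _, ?_, ?_, ?_, by abel⟩
        · -- b + b - c ∈ B
          have : b - a' ∈ B := ha'.1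
          have hc : c = a' + b := ha'.2
          convert this using 1
          rw [hc]; abel
        · exact hc'.1
        · -- c - a - a ∈ B
          have : b' - a ∈ B := hb'.1
          have hc : c = a + b' := hb'.2
          convert this using 1
          rw [hc]; abel
      · rintro ⟨a, b, c⟩ - ⟨a', b', c'⟩ - h
        simp only [Prod.mk.injEq] at h
        obtain ⟨h1, h2, h3, h4⟩ := h
        subst h1
        refine Prod.ext ?_ (Prod.ext rfl ?_)
        · have := sub_right_injective h3; simpa using this
        · have : c = c' := by
            have h2' : b + b - c = b + b - c' := h2
            exact sub_right_injective h2'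
          exact this
    calc (T'.card : ℝ) ≤ (((univ : Finset G) ×ˢ P).card : ℝ) := by exact_mod_cast this
      _ = (N : ℝ) * P.card := by rw [card_product, card_univ]; push_cast [← hNdef]; ring
  have hclique : ((graph t).cliqueFinset 3).card ≤ T'.card :=
    (card_le_card hsub).trans card_image_le
  have hcard3 : (Fintype.card (G ⊕ G ⊕ G) : ℝ) = 3 * N := by
    simp [Fintype.card_sum, ← hNdef]; ring
  have hchain : triangleRemovalBound (δ/9) * (3 * (N : ℝ)) ^ 3 ≤ (N : ℝ) * P.card := by
    calc triangleRemovalBound (δ/9) * (3 * (N : ℝ)) ^ 3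
        = triangleRemovalBound (δ/9) * (Fintype.card (G ⊕ G ⊕ G) : ℝ) ^ 3 := by rw [hcard3]
      _ ≤ (((graph t).cliqueFinset 3).card : ℝ) := hcount
      _ ≤ (T'.card : ℝ) := by exact_mod_cast hclique
      _ ≤ (N : ℝ) * P.card := hT'le
  have : 27 * triangleRemovalBound (δ/9) * (N : ℝ) ^ 2 * N ≤ (P.card : ℝ) * N := by
    calc 27 * triangleRemovalBound (δ/9) * (N : ℝ) ^ 2 * N
        = triangleRemovalBound (δ/9) * (3 * (N : ℝ)) ^ 3 := by ring
      _ ≤ (N : ℝ) * P.card := hchain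
      _ = (P.card : ℝ) * N := by ring
  exact le_of_mul_le_mul_right this hNR

open Classical in
/-- Roth's theorem in `F_p^n` with counting.  For a fixed odd prime
`p` and every `δ > 0` there is `c(δ) > 0` such that every `B ⊆ F_p^n` with
`|B| ≥ δ|V|` contains at least `c(δ)|V|²` three-term arithmetic progressions
(ordered triples `(x,y,z) ∈ B³` with `x + z = y + y`). -/
theorem roth_fpn_counting {p : ℕ} [NeZero p] (hp : p.Prime) (hodd : Odd p)
    (δ : ℝ) (hδ : 0 < δ) :
    ∃ c : ℝ, 0 < c ∧
      ∀ (n : ℕ) (B : Finset (Fin n → ZMod p)),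
        δ * (Fintype.card (Fin n → ZMod p) : ℝ) ≤ B.card →
        c * (Fintype.card (Fin n → ZMod p) : ℝ) ^ 2
          ≤ ((Finset.univ.filter (fun t : (Fin n → ZMod p) × (Fin n → ZMod p) × (Fin n → ZMod p) =>
              t.1 ∈ B ∧ t.2.1 ∈ B ∧ t.2.2 ∈ B ∧ t.1 + t.2.2 = t.2.1 + t.2.1)).card : ℝ) := by
  by_cases hδ1 : δ ≤ 1
  · refine ⟨27 * SimpleGraph.triangleRemovalBound (δ/9), ?_, ?_⟩
    · have : 0 < SimpleGraph.triangleRemovalBound (δ/9) :=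
        SimpleGraph.triangleRemovalBound_pos (by linarith)
      linarith
    · intro n B hB
      exact roth_counting_aux δ hδ hδ1 B hB
  · refine ⟨1, one_pos, ?_⟩
    intro n B hB
    exfalso
    have h1 : (B.card : ℝ) ≤ Fintype.card (Fin n → ZMod p) := by
      exact_mod_cast B.card_le_univ
    have h2 : (0 : ℝ) < Fintype.card (Fin n → ZMod p) := by
      exact_mod_cast Fintype.card_pos
    nlinarith
end
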